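/- Let R₁ and R₂ be relations with sensitive attribute s and ρ a representation constraint. If count_{R₁}(v) = count_{R₂}(v) for every value v (R₁ and R₂ are representatively equivalent), then the maximum cardinality of a subset of R₁ satisfying ρ equals the maximum cardinality of a subset of R₂ satisfying ρ. -/
import Mathlib


/-- The number of tuples in the relation `R` whose sensitive attribute `s` has value `v`. -/
def countVal {ι V : Type*} [DecidableEq V] (s : ι) (R : Finset (ι → V)) (v : V) : ℕ :=
  (R.filter fun t => t s = v).card

/-- `R` satisfies the representation constraint `ρ` on the sensitive attribute `s`. -/
def satRC {ι V : Type*} [DecidableEq V] (s : ι) (ρ : V →₀ ℚ) (R : Finset (ι → V)) : Prop :=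
  ∀ v : V, ρ v * (R.card : ℚ) ≤ (countVal s R v : ℚ)

/-- The maximum cardinality of a subset of `R` satisfying the representation constraint `ρ`.
It is well defined since the empty set satisfies every representation constraint. -/
noncomputable def maxSat {ι V : Type*} [DecidableEq V] (s : ι) (ρ : V →₀ ℚ)
    (R : Finset (ι → V)) : ℕ :=
  sSup {n : ℕ | ∃ R' ⊆ R, satRC s ρ R' ∧ R'.card = n}

lemma countVal_mono {ι V : Type*} [DecidableEq V] (s : ι) {R' R : Finset (ι → V)}
    (h : R' ⊆ R) (v : V) : countVal s R' v ≤ countVal s R v :=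
  Finset.card_le_card (Finset.filter_subset_filter _ h)

lemma exists_matching {ι V : Type*} [DecidableEq V] (s : ι) (R' R : Finset (ι → V))
    (h : ∀ v, countVal s R' v ≤ countVal s R v) :
    ∃ R'' ⊆ R, (∀ v, countVal s R'' v = countVal s R' v) ∧ R''.card = R'.card := by
  classical
  have hT : ∀ v : V, ∃ T ⊆ R.filter (fun t => t s = v), T.card = countVal s R' v := fun v =>
    Finset.exists_subset_card_eq (h v)
  choose T hTsub hTcard using hT
  set S := R'.image (fun t => t s) with hS
  refine ⟨S.biUnion T, ?_, ?_, ?_⟩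
  · intro x hx
    rcases Finset.mem_biUnion.1 hx with ⟨v, _, hxv⟩
    exact (Finset.filter_subset _ _) (hTsub v hxv)
  · intro v
    have key : (S.biUnion T).filter (fun t => t s = v) = if v ∈ S then T v else ∅ := by
      ext x
      simp only [Finset.mem_filter, Finset.mem_biUnion]
      constructor
      · rintro ⟨⟨w, hwS, hxw⟩, hxs⟩
        have hw : x s = w := (Finset.mem_filter.1 (hTsub w hxw)).2
        have hwv : w = v := hw.symm.trans hxs
        subst hwv
        simp [hwS, hxw]
      · intro hx
        by_cases hv : v ∈ S
        · simp only [hv, if_true] at hx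
          exact ⟨⟨v, hv, hx⟩, (Finset.mem_filter.1 (hTsub v hx)).2⟩
        · simp [hv] at hx
    unfold countVal
    rw [key]
    by_cases hv : v ∈ S
    · rw [if_pos hv, hTcard]; rfl
    · simp only [hv, if_false, Finset.card_empty]
      symm
      rw [Finset.card_eq_zero, Finset.filter_eq_empty_iff]
      intro x hx hxv
      exact hv (Finset.mem_image.2 ⟨x, hx, hxv⟩)
  · rw [Finset.card_biUnion]
    · have hc := Finset.card_eq_sum_card_fiberwise (f := fun t => t s) (s := R') (t := S)
        (fun x hx => Finset.mem_image_of_mem _ hx)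
      rw [hc]
      exact Finset.sum_congr rfl fun v _ => hTcard v
    · intro x _ y _ hxy
      refine Finset.disjoint_left.2 fun a hax hay => ?_
      have h1 := (Finset.mem_filter.1 (hTsub x hax)).2
      have h2 := (Finset.mem_filter.1 (hTsub y hay)).2
      exact hxy (h1.symm.trans h2)

/-- If `R₁` and `R₂` are representatively equivalent (same counts for every sensitive
value), then the maximum cardinalities of their `ρ`-satisfying subsets coincide. -/
theorem maxSat_eq_of_reprEquiv {ι V : Type*} [DecidableEq V]
    (s : ι) (ρ : V →₀ ℚ)
    (h0 : ∀ v, 0 ≤ ρ v) (h1 : ∀ v, ρ v ≤ 1)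
    (hsum : ∑ v ∈ ρ.support, ρ v ≤ 1)
    (R₁ R₂ : Finset (ι → V))
    (hequiv : ∀ v : V, countVal s R₁ v = countVal s R₂ v) :
    maxSat s ρ R₁ = maxSat s ρ R₂ := by
  have key : ∀ (A B : Finset (ι → V)), (∀ v, countVal s A v = countVal s B v) →
      {n : ℕ | ∃ R' ⊆ A, satRC s ρ R' ∧ R'.card = n} ⊆
      {n : ℕ | ∃ R' ⊆ B, satRC s ρ R' ∧ R'.card = n} := by
    rintro A B hAB n ⟨R', hsub, hsat, hcard⟩
    obtain ⟨R'', hsub'', hcnt, hc⟩ := exists_matching s R' B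
      (fun v => (hAB v) ▸ countVal_mono s hsub v)
    refine ⟨R'', hsub'', fun v => ?_, hc.trans hcard⟩
    have := hsat v
    rw [hcnt v, hc]
    exact this
  unfold maxSat
  congr 1
  exact le_antisymm (key R₁ R₂ hequiv) (key R₂ R₁ fun v => (hequiv v).symm)
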